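/- (Harten's lemma, one-sided version.) Consider a scheme u_i^{n+1} = u_i^n + C_{i+1/2}(u_{i+1}^n - u_i^n) - D_{i-1/2}(u_i^n - u_{i-1}^n) on a periodic grid, where the coefficients (which may depend on the data) satisfy C_{i+1/2} ≥ 0, D_{i+1/2} ≥ 0, and C_{i+1/2} + D_{i+1/2} ≤ 1 for all i. Then TV(u^{n+1}) ≤ TV(u^n). -/
import Mathlib


theorem harten_lemma_tvd
    (N : ℕ) [NeZero N] (u u' C D : ZMod N → ℝ)
    (hC : ∀ i, 0 ≤ C i) (hD : ∀ i, 0 ≤ D i)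
    (hCD : ∀ i, C i + D i ≤ 1)
    (hu' : ∀ i, u' i = u i + C i * (u (i + 1) - u i) - D (i - 1) * (u i - u (i - 1))) :
    ∑ i : ZMod N, |u' (i + 1) - u' i| ≤ ∑ i : ZMod N, |u (i + 1) - u i| := by
  set v : ZMod N → ℝ := fun i => |u (i + 1) - u i| with hv
  have key : ∀ i : ZMod N,
      |u' (i + 1) - u' i| ≤ (1 - C i - D i) * v i + C (i + 1) * v (i + 1)
        + D (i - 1) * v (i - 1) := by
    intro i
    have h1 : u' (i + 1) - u' i
        = (1 - C i - D i) * (u (i + 1) - u i) + C (i + 1) * (u (i + 1 + 1) - u (i + 1))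
          + D (i - 1) * (u (i - 1 + 1) - u (i - 1)) := by
      rw [hu' (i + 1), hu' i]
      have : i + 1 - 1 = i := by ring
      rw [this]
      have : i - 1 + 1 = i := by ring
      rw [this]
      ring
    rw [h1]
    have ha : 0 ≤ 1 - C i - D i := by linarith [hCD i]
    calc |(1 - C i - D i) * (u (i + 1) - u i) + C (i + 1) * (u (i + 1 + 1) - u (i + 1))
          + D (i - 1) * (u (i - 1 + 1) - u (i - 1))|
        ≤ |(1 - C i - D i) * (u (i + 1) - u i)| + |C (i + 1) * (u (i + 1 + 1) - u (i + 1))|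
          + |D (i - 1) * (u (i - 1 + 1) - u (i - 1))| := by
          exact (abs_add_le _ _).trans (by gcongr; exact abs_add_le _ _)
      _ = (1 - C i - D i) * v i + C (i + 1) * v (i + 1) + D (i - 1) * v (i - 1) := by
          rw [abs_mul, abs_mul, abs_mul, abs_of_nonneg ha, abs_of_nonneg (hC _),
            abs_of_nonneg (hD _)]
  calc ∑ i : ZMod N, |u' (i + 1) - u' i|
      ≤ ∑ i : ZMod N, ((1 - C i - D i) * v i + C (i + 1) * v (i + 1)
          + D (i - 1) * v (i - 1)) := Finset.sum_le_sum fun i _ => key i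
    _ = ∑ i : ZMod N, (1 - C i - D i) * v i + ∑ i : ZMod N, C (i + 1) * v (i + 1)
          + ∑ i : ZMod N, D (i - 1) * v (i - 1) := by
        rw [Finset.sum_add_distrib, Finset.sum_add_distrib]
    _ = ∑ i : ZMod N, (1 - C i - D i) * v i + ∑ i : ZMod N, C i * v i
          + ∑ i : ZMod N, D i * v i := by
        congr 1
        · congr 1
          exact Fintype.sum_equiv (Equiv.addRight 1) _ _ fun i => rfl
        · exact Fintype.sum_equiv (Equiv.subRight 1) _ _ fun i => rfl
    _ = ∑ i : ZMod N, v i := by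
        rw [← Finset.sum_add_distrib, ← Finset.sum_add_distrib]
        exact Finset.sum_congr rfl fun i _ => by ring
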